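/- Let K be a field of characteristic zero, k ∈ ℕ, j ∈ ℕ₀, ε, b ∈ ℚ with ε > 0 and b > 0, c ∈ ℚ, and set a := (j/k)·b + ε. Suppose f, g ∈ K[x] are nonzero with f(0) ≠ 0 and g(0) ≠ 0, and that there exists h ∈ ℕ₀ such that x^h·f^{k+j} = c·f^k·g + a·x·(f^k)′·g − b·x·g′·f^k, where ′ denotes the formal derivative. Then every irreducible factor u of f, with multiplicity m_u in f, has multiplicity j·m_u + 1 in g; consequently g = f^j·ḡ for some separable (i.e. squarefree) polynomial ḡ ∈ K[x], and the number of distinct irreducible factors of f is at most the degree of ḡ. -/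

import Mathlib

open scoped BigOperators
open scoped Classical

noncomputable section

namespace Dixmier

variable (K : Type*) [Field K] [CharZero K]

/-- Laurent polynomials `K[t,t⁻¹]`. -/
abbrev Laur (K : Type*) [Field K] := LaurentPolynomial K

/-- The `K`-linear endomorphisms of `K[t,t⁻¹]`. -/
abbrev E (K : Type*) [Field K] := Module.End K (Laur K)

/-- Multiplication by `t^i`, i.e. the element `X^{i/l}` of `A₁⁽ˡ⁾`. -/
def Xpow (i : ℤ) : E K := LinearMap.mulLeft K (LaurentPolynomial.T i)

/-- The operator `Y = (1/l)·t^{1-l}·d/dt` of `A₁⁽ˡ⁾`; it maps `t^n ↦ (n/l)·t^{n-l}`. -/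
def Yop (l : ℕ) : E K :=
  Finsupp.linearCombination K (fun n : ℤ =>
    algebraMap ℚ K ((n : ℚ) / (l : ℚ)) • LaurentPolynomial.T (n - (l : ℤ)))
    ∘ₗ (AddMonoidAlgebra.coeffLinearEquiv K).toLinearMap

/-- The algebra `A₁⁽ˡ⁾`: the subalgebra of endomorphisms of `K[t,t⁻¹]` generated by
multiplication by `t`, multiplication by `t⁻¹`, and `Y`. -/
def A1 (l : ℕ) : Subalgebra K (E K) :=
  Algebra.adjoin K {Xpow K 1, Xpow K (-1), Yop K l}

/-- The Weyl algebra `A₁`, identified with its copy inside `A₁⁽¹⁾`. -/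
def Weyl : Subalgebra K (E K) :=
  Algebra.adjoin K {Xpow K 1, Yop K 1}

/-- Interpretation of a coefficient family: `f ↦ ∑ f (i,j) • X^{i/l} Y^j`. -/
def toEnd (l : ℕ) : ((ℤ × ℕ) →₀ K) →ₗ[K] E K :=
  Finsupp.linearCombination K fun p : ℤ × ℕ => Xpow K p.1 * Yop K l ^ p.2

/-- The (unique) coefficient family representing `P ∈ A₁⁽ˡ⁾`. -/
def rep (l : ℕ) (P : E K) : (ℤ × ℕ) →₀ K :=
  if h : ∃ f, toEnd K l f = P then h.choose else 0

/-- The point `(i/l, j) ∈ ℚ²` attached to an exponent pair `(i,j)`. -/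
def pt (l : ℕ) (p : ℤ × ℕ) : ℚ × ℚ := ((p.1 : ℚ) / (l : ℚ), (p.2 : ℚ))

/-- The set of points `(i/l, j) ∈ ℚ²` in the support of a coefficient family. -/
def suppPts (l : ℕ) (f : (ℤ × ℕ) →₀ K) : Set (ℚ × ℚ) :=
  pt l '' (f.support : Set (ℤ × ℕ))

/-- The support of `P ∈ A₁⁽ˡ⁾`, as a subset of `(1/l)ℤ × ℕ₀ ⊆ ℚ²`. -/
def Supp (l : ℕ) (P : E K) : Set (ℚ × ℚ) := suppPts K l (rep K l P)

/-- `v_{ρ,σ}` on points of `ℚ²`. -/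
def vp (ρ σ : ℤ) (q : ℚ × ℚ) : ℚ := ρ * q.1 + σ * q.2

/-- `v_{ρ,σ}(P) ∈ WithBot ℚ` (with `v_{ρ,σ}(0) = ⊥ = -∞`). -/
def vdeg (ρ σ : ℤ) (l : ℕ) (P : E K) : WithBot ℚ :=
  (rep K l P).support.sup fun p => (vp ρ σ (pt l p) : WithBot ℚ)

/-- The coefficient family of the `(ρ,σ)`-leading part of `P`. -/
def ltRep (ρ σ : ℤ) (l : ℕ) (P : E K) : (ℤ × ℕ) →₀ K :=
  (rep K l P).filter fun p => (vp ρ σ (pt l p) : WithBot ℚ) = vdeg K ρ σ l P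

/-- The commutative algebra `L⁽ˡ⁾ = K[x^{1/l}, x^{-1/l}, y]`; the monomial `x^{i/l}·y^j`
corresponds to the exponent pair `(i,j) ∈ ℤ × ℕ`. -/
abbrev Lalg (K : Type*) [Field K] := AddMonoidAlgebra K (ℤ × ℕ)

/-- The `(ρ,σ)`-leading term `ℓ_{ρ,σ}(P) ∈ L⁽ˡ⁾`. -/
def ell (ρ σ : ℤ) (l : ℕ) (P : E K) : Lalg K := AddMonoidAlgebra.ofCoeff (ltRep K ρ σ l P)

/-- `R ∈ L⁽ˡ⁾` is `(ρ,σ)`-homogeneous: it is `0` or equal to its own leading term. -/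
def IsHomogL (ρ σ : ℤ) (l : ℕ) (R : Lalg K) : Prop :=
  ∀ p ∈ R.coeff.support, ∀ q ∈ R.coeff.support, vp ρ σ (pt l p) = vp ρ σ (pt l q)

/-- `F ∈ A₁⁽ˡ⁾` is `(ρ,σ)`-homogeneous. -/
def IsHomogE (ρ σ : ℤ) (l : ℕ) (F : E K) : Prop :=
  ∀ p ∈ (rep K l F).support, ∀ q ∈ (rep K l F).support,
    vp ρ σ (pt l p) = vp ρ σ (pt l q)

/-- `q` is the point of `Supp(ℓ_{ρ,σ}(P))` at which `v_{1,-1}` is maximal. -/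
def IsStOf (ρ σ : ℤ) (l : ℕ) (P : E K) (q : ℚ × ℚ) : Prop :=
  q ∈ suppPts K l (ltRep K ρ σ l P) ∧
    ∀ q' ∈ suppPts K l (ltRep K ρ σ l P), vp 1 (-1) q' ≤ vp 1 (-1) q

/-- `st_{ρ,σ}(P)`. -/
def stP (ρ σ : ℤ) (l : ℕ) (P : E K) : ℚ × ℚ :=
  if h : ∃ q, IsStOf K ρ σ l P q then h.choose else 0

/-- `q` is the point of `Supp(ℓ_{ρ,σ}(P))` at which `v_{-1,1}` is maximal. -/
def IsEnOf (ρ σ : ℤ) (l : ℕ) (P : E K) (q : ℚ × ℚ) : Prop :=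
  q ∈ suppPts K l (ltRep K ρ σ l P) ∧
    ∀ q' ∈ suppPts K l (ltRep K ρ σ l P), vp (-1) 1 q' ≤ vp (-1) 1 q

/-- `en_{ρ,σ}(P)`. -/
def enP (ρ σ : ℤ) (l : ℕ) (P : E K) : ℚ × ℚ :=
  if h : ∃ q, IsEnOf K ρ σ l P q then h.choose else 0

/-- `w(P)`: the point of `Supp(ℓ_{1,-1}(P))` with maximal first coordinate. -/
def IsWOf (l : ℕ) (P : E K) (q : ℚ × ℚ) : Prop :=
  q ∈ suppPts K l (ltRep K 1 (-1) l P) ∧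
    ∀ q' ∈ suppPts K l (ltRep K 1 (-1) l P), q'.1 ≤ q.1

def wP (l : ℕ) (P : E K) : ℚ × ℚ :=
  if h : ∃ q, IsWOf K l P q then h.choose else 0

/-- `w̄(P)`: the point of `Supp(ℓ_{-1,1}(P))` with maximal first coordinate. -/
def IsWBarOf (l : ℕ) (P : E K) (q : ℚ × ℚ) : Prop :=
  q ∈ suppPts K l (ltRep K (-1) 1 l P) ∧
    ∀ q' ∈ suppPts K l (ltRep K (-1) 1 l P), q'.1 ≤ q.1

def wBarP (l : ℕ) (P : E K) : ℚ × ℚ :=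
  if h : ∃ q, IsWBarOf K l P q then h.choose else 0

/-- The cross product `A × B` on `ℚ²`. -/
def cross (A B : ℚ × ℚ) : ℚ := A.1 * B.2 - A.2 * B.1

/-- The set of directions `𝔙̄`. -/
def VBar (ρ σ : ℤ) : Prop := Int.gcd ρ σ = 1 ∧ 0 ≤ ρ + σ

/-- The set of directions `𝔙`. -/
def V (ρ σ : ℤ) : Prop := Int.gcd ρ σ = 1 ∧ 0 < ρ + σ

/-- The set of directions `𝔙⁰`. -/
def V0 (ρ σ : ℤ) : Prop := V ρ σ ∧ 0 < ρ

/-- The order on directions: `(1,-1)` is smallest, `(-1,1)` is largest, and otherwise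
`(ρ,σ) < (ρ',σ')` iff `ρσ' - σρ' > 0`. -/
def dirLt (ρ σ ρ' σ' : ℤ) : Prop :=
  ((ρ, σ) = ((1 : ℤ), (-1 : ℤ)) ∧ (ρ', σ') = ((-1 : ℤ), (1 : ℤ))) ∨ 0 < ρ * σ' - σ * ρ'

/-- The commutator `[P,Q] = PQ - QP`. -/
def brk (P Q : E K) : E K := P * Q - Q * P

/-- `P` and `Q` are `(ρ,σ)`-proportional:
`v_{ρ,σ}([P,Q]) < v_{ρ,σ}(P) + v_{ρ,σ}(Q) - (ρ+σ)`. -/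
def Proportional (ρ σ : ℤ) (l : ℕ) (P Q : E K) : Prop :=
  vdeg K ρ σ l (brk K P Q) + (((ρ : ℚ) + (σ : ℚ) : ℚ) : WithBot ℚ)
    < vdeg K ρ σ l P + vdeg K ρ σ l Q

/-- The `(ρ,σ)`-bracket `[P,Q]_{ρ,σ} ∈ L⁽ˡ⁾`. -/
def rsBrk (ρ σ : ℤ) (l : ℕ) (P Q : E K) : Lalg K :=
  if Proportional K ρ σ l P Q then 0 else ell K ρ σ l (brk K P Q)

/-- `(ρ,σ) ∈ Dir(P)`. -/
def InDir (ρ σ : ℤ) (l : ℕ) (P : E K) : Prop :=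
  V ρ σ ∧ 1 < (ltRep K ρ σ l P).support.card

/-- `(ρ,σ) ∈ Dir̄(P)`. -/
def InDirBar (ρ σ : ℤ) (l : ℕ) (P : E K) : Prop :=
  InDir K ρ σ l P ∨ (ρ, σ) = ((1 : ℤ), (-1 : ℤ)) ∨ (ρ, σ) = ((-1 : ℤ), (1 : ℤ))

/-- The minimal second exponent occurring in a coefficient family. -/
def minSnd (f : (ℤ × ℕ) →₀ K) : ℕ :=
  if h : f.support.Nonempty then (f.support.image Prod.snd).min' (h.image _) else 0

/-- The univariate polynomial `f_{P,ρ,σ} ∈ K[x]`: writing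
`ℓ_{ρ,σ}(P) = ∑_{i=0}^{γ} a_i·x^{r/l - iσ/ρ}·y^{s+i}`, it is `∑ a_i·xⁱ`. -/
def fPol (ρ σ : ℤ) (l : ℕ) (P : E K) : Polynomial K :=
  ∑ p ∈ (ltRep K ρ σ l P).support,
    Polynomial.C (ltRep K ρ σ l P p) *
      Polynomial.X ^ (p.2 - minSnd K (ltRep K ρ σ l P))

/-- The total degree `v_{1,1}(P)` of an element of the Weyl algebra, as a natural number. -/
def tdeg (P : E K) : ℕ :=
  (rep K 1 P).support.sup fun p => p.1.toNat + p.2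

/-- `(P,Q)` is a counterexample to the Dixmier conjecture: `[Q,P] = 1` but `P` and `Q`
do not generate the Weyl algebra `A₁` over `K`. -/
def IsCounterexample (P Q : E K) : Prop :=
  P ∈ Weyl K ∧ Q ∈ Weyl K ∧ brk K Q P = 1 ∧ Algebra.adjoin K {P, Q} ≠ Weyl K

/-- A minimal pair: a counterexample minimizing `gcd(v_{1,1}(P), v_{1,1}(Q))`. -/
def IsMinimalPair (P Q : E K) : Prop :=
  IsCounterexample K P Q ∧
    ∀ P' Q' : E K, IsCounterexample K P' Q' →
      Nat.gcd (tdeg K P) (tdeg K Q) ≤ Nat.gcd (tdeg K P') (tdeg K Q')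

/-- `P` is subrectangular (with some vertex `(a,b) ∈ ℕ × ℕ`). -/
def Subrectangular (P : E K) : Prop :=
  ∃ a b : ℕ, 0 < a ∧ 0 < b ∧ ((a : ℚ), (b : ℚ)) ∈ Supp K 1 P ∧
    ∀ q ∈ Supp K 1 P, 0 ≤ q.1 ∧ q.1 ≤ (a : ℚ) ∧ 0 ≤ q.2 ∧ q.2 ≤ (b : ℚ)

/-- A standard minimal pair. -/
def IsStandardMinimalPair (P Q : E K) : Prop :=
  IsMinimalPair K P Q ∧ Subrectangular K P ∧ Subrectangular K Q ∧
    vp 1 (-1) (stP K 1 0 1 P) < 0 ∧ vp 1 (-1) (stP K 1 0 1 Q) < 0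

/-- The commutative algebra of "polynomials" with exponents in `ℚ²`, used to express
monomials such as `x^{r/l - iσ/ρ}·y^{s+i}`. -/
abbrev LQ (K : Type*) [Field K] := AddMonoidAlgebra K (ℚ × ℚ)

/-- The embedding of `L⁽ˡ⁾` into `LQ`, sending `x^{i/l}·y^j` to the monomial with
exponent `(i/l, j)`. -/
def toLQ (l : ℕ) (R : Lalg K) : LQ K := AddMonoidAlgebra.ofCoeff (Finsupp.mapDomain (pt l) R.coeff)

/-- The generalized binomial coefficient `binom(q,k) = q(q-1)⋯(q-k+1)/k!`. -/
def qchoose (q : ℚ) (k : ℕ) : ℚ :=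
  (∏ m ∈ Finset.range k, (q - (m : ℚ))) / (k.factorial : ℚ)

end Dixmier

end

namespace Dixmier

open Polynomial

private lemma card_le_sum_map {α : Type*} (t : Multiset α) (f : α → ℕ)
    (h : ∀ a ∈ t, 1 ≤ f a) : Multiset.card t ≤ (t.map f).sum := by
  induction t using Multiset.induction_on with
  | empty => simp
  | cons a s ih =>
    simp only [Multiset.map_cons, Multiset.sum_cons, Multiset.card_cons]
    have h1 := h a (Multiset.mem_cons_self _ _)
    have h2 := ih (fun x hx => h x (Multiset.mem_cons_of_mem hx))
    omega

private lemma deriv_aux {K : Type*} [Field K] (u G : K[X]) (n : ℕ) :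
    u * Polynomial.derivative (u ^ n * G) =
      Polynomial.C (n : K) * u ^ n * Polynomial.derivative u * G
        + u ^ (n + 1) * Polynomial.derivative G := by
  cases n with
  | zero => simp
  | succ s =>
    rw [Polynomial.derivative_mul, Polynomial.derivative_pow, Nat.succ_sub_one]
    push_cast
    ring

private lemma exp_le {R : Type*} [CommRing R] [IsDomain R] {u V W : R} (hu : Prime u)
    {s t : ℕ} (h : V * u ^ s = W * u ^ t) (hV : ¬ u ∣ V) : t ≤ s := by
  by_contra hlt
  push_neg at hlt
  have h2 : V * u ^ s = (W * u ^ (t - s)) * u ^ s := by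
    rw [h, mul_assoc, ← pow_add]
    congr 2
    omega
  have h3 : V = W * u ^ (t - s) := mul_right_cancel₀ (pow_ne_zero _ hu.ne_zero) h2
  apply hV
  obtain ⟨d, hd⟩ : ∃ d, t - s = d + 1 := ⟨t - s - 1, by omega⟩
  refine ⟨W * u ^ d, ?_⟩
  rw [h3, hd, pow_succ]
  ring

private lemma core_lemma {K : Type*} [Field K] [CharZero K]
    (k : ℕ) (hk : 0 < k) (j h : ℕ) (ε b c a : ℚ) (hε : 0 < ε) (hb : 0 < b)
    (ha : a = (j : ℚ) / (k : ℚ) * b + ε)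
    (u F G f g : Polynomial K) (m n : ℕ) (hu : Prime u)
    (huX : ¬ u ∣ Polynomial.X) (huF : ¬ u ∣ F) (huG : ¬ u ∣ G)
    (hfe : f = u ^ m * F) (hge : g = u ^ n * G)
    (heq : Polynomial.X ^ h * f ^ (k + j) =
        Polynomial.C (algebraMap ℚ K c) * (f ^ k * g) +
          Polynomial.C (algebraMap ℚ K a) * (Polynomial.X * Polynomial.derivative (f ^ k) * g) -
          Polynomial.C (algebraMap ℚ K b) * (Polynomial.X * Polynomial.derivative g * f ^ k)) :
    (0 < m → n = j * m + 1) ∧ (m = 0 → n ≤ 1) := by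
  have hirr := hu.irreducible
  -- u does not divide its own derivative
  have hud : ¬ u ∣ Polynomial.derivative u := by
    intro hdvd
    have hpos : 0 < u.natDegree := hirr.natDegree_pos
    have hne : Polynomial.derivative u ≠ 0 := fun h0 => by
      have := Polynomial.natDegree_eq_zero_of_derivative_eq_zero h0
      omega
    have h1 := Polynomial.degree_le_of_dvd hdvd hne
    have h2 := Polynomial.degree_derivative_lt hu.ne_zero
    exact absurd (h1.trans_lt h2) (lt_irrefl _)
  obtain ⟨N, hN⟩ : ∃ N, m * k = N := ⟨_, rfl⟩
  obtain ⟨P, hP⟩ : ∃ P, m * j = P := ⟨_, rfl⟩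
  have hfk : f ^ k = u ^ N * F ^ k := by rw [hfe, mul_pow, ← pow_mul, hN]
  have hfkj : f ^ (k + j) = u ^ (N + P) * F ^ (k + j) := by
    rw [hfe, mul_pow, ← pow_mul, Nat.mul_add, hN, hP]
  have hd1 := deriv_aux u (F ^ k) N
  have hd2 := deriv_aux u G n
  rw [hfk, hfkj, hge] at heq
  have hVnd : ¬ u ∣ Polynomial.X ^ h * F ^ (k + j) := by
    intro hd
    rcases hu.dvd_mul.mp hd with h1 | h1
    · exact huX (hu.dvd_of_dvd_pow h1)
    · exact huF (hu.dvd_of_dvd_pow h1)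
  by_cases hcrit : a * (N : ℚ) = b * (n : ℚ)
  · -- degenerate case: the leading coefficients cancel
    have hABK : Polynomial.C (algebraMap ℚ K a) * Polynomial.C ((N : K)) =
        Polynomial.C (algebraMap ℚ K b) * Polynomial.C ((n : K)) := by
      rw [← Polynomial.C_mul, ← Polynomial.C_mul]
      congr 1
      rw [← map_natCast (algebraMap ℚ K) N, ← map_natCast (algebraMap ℚ K) n,
        ← map_mul, ← map_mul, hcrit]
    have hmain2 : (Polynomial.X ^ h * F ^ (k + j)) * u ^ (N + P + 1)
        = (Polynomial.C (algebraMap ℚ K c) * (F ^ k * G)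
            + Polynomial.C (algebraMap ℚ K a) * Polynomial.X * Polynomial.derivative (F ^ k) * G
            - Polynomial.C (algebraMap ℚ K b) * Polynomial.X * Polynomial.derivative G * F ^ k)
          * u ^ (N + n + 1) := by
      linear_combination u * heq
        + (Polynomial.C (algebraMap ℚ K a) * Polynomial.X * u ^ n * G) * hd1
        - (Polynomial.C (algebraMap ℚ K b) * Polynomial.X * u ^ N * F ^ k) * hd2
        + (Polynomial.X * Polynomial.derivative u * F ^ k * G * u ^ (N + n)) * hABK
    have hle := exp_le hu hmain2 hVnd
    constructor
    · intro hm
      exfalso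
      have hnP : (n : ℚ) ≤ (P : ℚ) := by exact_mod_cast (by omega : n ≤ P)
      have hNQ : (N : ℚ) = (m : ℚ) * (k : ℚ) := by exact_mod_cast congrArg (Nat.cast (R := ℚ)) hN.symm
      have hPQ : (P : ℚ) = (m : ℚ) * (j : ℚ) := by exact_mod_cast congrArg (Nat.cast (R := ℚ)) hP.symm
      have hk0 : (0:ℚ) < (k:ℚ) := by exact_mod_cast hk
      have hm1 : (1:ℚ) ≤ (m:ℚ) := by exact_mod_cast hm
      rw [ha, hNQ] at hcrit
      have hjk : (j:ℚ) / (k:ℚ) * (k:ℚ) = (j:ℚ) := div_mul_cancel₀ _ (ne_of_gt hk0)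
      have h2 : ((j:ℚ) / (k:ℚ) * b + ε) * ((m:ℚ) * (k:ℚ))
          = ((j:ℚ) / (k:ℚ) * (k:ℚ)) * b * (m:ℚ) + ε * ((m:ℚ) * (k:ℚ)) := by ring
      rw [hjk] at h2
      have h3 : b * (n:ℚ) ≤ b * ((m:ℚ) * (j:ℚ)) := by
        have := mul_le_mul_of_nonneg_left hnP hb.le
        rwa [hPQ] at this
      have h4 : 0 < ε * ((m:ℚ) * (k:ℚ)) :=
        mul_pos hε (mul_pos (by linarith : (0:ℚ) < (m:ℚ)) hk0)
      have h7 : b * ((m:ℚ) * (j:ℚ)) = (j:ℚ) * b * (m:ℚ) := by ring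
      linarith [hcrit, h2, h3, h4, h7]
    · intro hm0
      rw [hm0, Nat.zero_mul] at hN
      have h5 : (0:ℚ) = b * (n:ℚ) := by
        have := hcrit
        rw [← hN] at this
        simpa using this
      have h6 : (n:ℚ) = 0 := by
        rcases mul_eq_zero.mp h5.symm with h | h
        · exact absurd h hb.ne'
        · exact h
      have : n = 0 := by exact_mod_cast h6
      omega
  · -- generic case
    have hmain : (Polynomial.X ^ h * F ^ (k + j)) * u ^ (N + P + 1)
        = (Polynomial.C (algebraMap ℚ K c) * u * (F ^ k * G)
            + Polynomial.C (algebraMap ℚ K a) * Polynomial.X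
                * (Polynomial.C ((N : K)) * Polynomial.derivative u * F ^ k
                    + u * Polynomial.derivative (F ^ k)) * G
            - Polynomial.C (algebraMap ℚ K b) * Polynomial.X
                * (Polynomial.C ((n : K)) * Polynomial.derivative u * G
                    + u * Polynomial.derivative G) * F ^ k)
          * u ^ (N + n) := by
      linear_combination u * heq
        + (Polynomial.C (algebraMap ℚ K a) * Polynomial.X * u ^ n * G) * hd1
        - (Polynomial.C (algebraMap ℚ K b) * Polynomial.X * u ^ N * F ^ k) * hd2
    set e : K := algebraMap ℚ K (a * (N : ℚ) - b * (n : ℚ)) with he_def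
    have hCe : Polynomial.C (algebraMap ℚ K a) * Polynomial.C ((N : K))
        - Polynomial.C (algebraMap ℚ K b) * Polynomial.C ((n : K)) = Polynomial.C e := by
      rw [← Polynomial.C_mul, ← Polynomial.C_mul, ← Polynomial.C_sub]
      congr 1
      rw [he_def, ← map_natCast (algebraMap ℚ K) N, ← map_natCast (algebraMap ℚ K) n,
        ← map_mul, ← map_mul, ← map_sub]
    have he : e ≠ 0 := by
      rw [he_def]
      intro h0
      exact hcrit (sub_eq_zero.mp ((algebraMap ℚ K).injective (by simpa using h0)))
    have hWnd : ¬ u ∣ (Polynomial.C (algebraMap ℚ K c) * u * (F ^ k * G)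
            + Polynomial.C (algebraMap ℚ K a) * Polynomial.X
                * (Polynomial.C ((N : K)) * Polynomial.derivative u * F ^ k
                    + u * Polynomial.derivative (F ^ k)) * G
            - Polynomial.C (algebraMap ℚ K b) * Polynomial.X
                * (Polynomial.C ((n : K)) * Polynomial.derivative u * G
                    + u * Polynomial.derivative G) * F ^ k) := by
      intro hdvd
      have hd3 : u ∣ Polynomial.C e * (Polynomial.X * Polynomial.derivative u * (F ^ k * G)) := by
        have hrw : Polynomial.C e * (Polynomial.X * Polynomial.derivative u * (F ^ k * G))
            = (Polynomial.C (algebraMap ℚ K c) * u * (F ^ k * G)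
                + Polynomial.C (algebraMap ℚ K a) * Polynomial.X
                    * (Polynomial.C ((N : K)) * Polynomial.derivative u * F ^ k
                        + u * Polynomial.derivative (F ^ k)) * G
                - Polynomial.C (algebraMap ℚ K b) * Polynomial.X
                    * (Polynomial.C ((n : K)) * Polynomial.derivative u * G
                        + u * Polynomial.derivative G) * F ^ k)
              - u * (Polynomial.C (algebraMap ℚ K c) * (F ^ k * G)
                  + Polynomial.C (algebraMap ℚ K a) * Polynomial.X * Polynomial.derivative (F ^ k) * G
                  - Polynomial.C (algebraMap ℚ K b) * Polynomial.X * Polynomial.derivative G * F ^ k) := by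
          linear_combination (-(Polynomial.X * Polynomial.derivative u * (F ^ k * G))) * hCe
        rw [hrw]
        exact dvd_sub hdvd (Dvd.intro _ rfl)
      rcases hu.dvd_mul.mp hd3 with h1 | h1
      · exact hu.not_isUnit (isUnit_of_dvd_unit h1
          (Polynomial.isUnit_C.mpr (isUnit_iff_ne_zero.mpr he)))
      · rcases hu.dvd_mul.mp h1 with h2 | h2
        · rcases hu.dvd_mul.mp h2 with h3 | h3
          · exact huX h3
          · exact hud h3
        · rcases hu.dvd_mul.mp h2 with h3 | h3
          · exact huF (hu.dvd_of_dvd_pow h3)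
          · exact huG h3
    have h1 := exp_le hu hmain hVnd
    have h2 := exp_le hu hmain.symm hWnd
    have hnP : n = P + 1 := by omega
    constructor
    · intro _
      rw [hnP, ← hP]
      ring
    · intro hm0
      rw [hm0, Nat.zero_mul] at hP
      omega

open UniqueFactorizationMonoid in
theorem PE_multiplicity (K : Type*) [Field K] [CharZero K]
    (k : ℕ) (hk : 0 < k) (j : ℕ) (ε b : ℚ) (hε : 0 < ε) (hb : 0 < b)
    (c a : ℚ) (ha : a = (j : ℚ) / (k : ℚ) * b + ε)
    (f g : Polynomial K) (hf : f ≠ 0) (hg : g ≠ 0)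
    (hf0 : Polynomial.eval 0 f ≠ 0) (hg0 : Polynomial.eval 0 g ≠ 0)
    (heq : ∃ h : ℕ,
      Polynomial.X ^ h * f ^ (k + j) =
        algebraMap ℚ K c • (f ^ k * g) +
          algebraMap ℚ K a • (Polynomial.X * Polynomial.derivative (f ^ k) * g) -
          algebraMap ℚ K b • (Polynomial.X * Polynomial.derivative g * f ^ k)) :
    (∀ u : Polynomial K, Irreducible u → u ∣ f →
      ∀ m : ℕ, u ^ m ∣ f → ¬ u ^ (m + 1) ∣ f →
        u ^ (j * m + 1) ∣ g ∧ ¬ u ^ (j * m + 2) ∣ g) ∧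
    (∃ gbar : Polynomial K, Squarefree gbar ∧ g = f ^ j * gbar ∧
      (UniqueFactorizationMonoid.normalizedFactors f).toFinset.card ≤ gbar.natDegree) := by
  classical
  obtain ⟨h, heq⟩ := heq
  simp only [Polynomial.smul_eq_C_mul] at heq
  -- no prime factor of f or g divides X
  have hXnd : ∀ u : Polynomial K, Prime u → (u ∣ f ∨ u ∣ g) → ¬ u ∣ Polynomial.X := by
    rintro u hu hor ⟨v, hv⟩
    have hu0 : Polynomial.eval 0 u ≠ 0 := by
      rcases hor with ⟨w, hw⟩ | ⟨w, hw⟩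
      · intro h0; apply hf0; rw [hw, Polynomial.eval_mul, h0, zero_mul]
      · intro h0; apply hg0; rw [hw, Polynomial.eval_mul, h0, zero_mul]
    have he0 : Polynomial.eval 0 u * Polynomial.eval 0 v = 0 := by
      rw [← Polynomial.eval_mul, ← hv, Polynomial.eval_X]
    have hv0 : Polynomial.eval 0 v = 0 := by
      rcases mul_eq_zero.mp he0 with h1 | h1
      · exact absurd h1 hu0
      · exact h1
    obtain ⟨w, hw⟩ : Polynomial.X ∣ v :=
      Polynomial.X_dvd_iff.mpr (by rwa [Polynomial.coeff_zero_eq_eval_zero])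
    rw [hw] at hv
    have hcan : Polynomial.X * 1 = Polynomial.X * (u * w) := by linear_combination hv
    exact hu.not_isUnit
      (IsUnit.of_mul_eq_one _ (mul_left_cancel₀ Polynomial.X_ne_zero hcan).symm)
  -- exact power extraction for g
  have extract : ∀ u : Polynomial K, Irreducible u →
      ∃ n G, g = u ^ n * G ∧ ¬ u ∣ G ∧ u ^ n ∣ g ∧ ¬ u ^ (n + 1) ∣ g := by
    intro u hirr
    have hex : ∃ N : ℕ, ¬ u ^ N ∣ g := by
      refine ⟨g.natDegree + 1, fun hd => ?_⟩
      have hle := Polynomial.natDegree_le_of_dvd hd hg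
      rw [Polynomial.natDegree_pow] at hle
      have h1 := hirr.natDegree_pos
      nlinarith
    have hNpos : 0 < Nat.find hex := by
      rcases Nat.eq_zero_or_pos (Nat.find hex) with h0 | h1
      · have := Nat.find_spec hex
        rw [h0, pow_zero] at this
        exact absurd (one_dvd g) this
      · exact h1
    obtain ⟨d, hdd⟩ : ∃ d, Nat.find hex = d + 1 := ⟨Nat.find hex - 1, by omega⟩
    have hn1 : u ^ d ∣ g := not_not.mp (Nat.find_min hex (by omega))
    obtain ⟨G, hG⟩ := hn1
    refine ⟨d, G, hG, ?_, ⟨G, hG⟩, ?_⟩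
    · rintro ⟨G', hG'⟩
      apply Nat.find_spec hex
      refine ⟨G', ?_⟩
      rw [hdd, hG, hG', pow_succ]
      ring
    · rw [← hdd]
      exact Nat.find_spec hex
  -- part 1
  have part1 : ∀ u : Polynomial K, Irreducible u → u ∣ f →
      ∀ m : ℕ, u ^ m ∣ f → ¬ u ^ (m + 1) ∣ f →
        u ^ (j * m + 1) ∣ g ∧ ¬ u ^ (j * m + 2) ∣ g := by
    intro u hirr huf m hm hm1
    have hu : Prime u := hirr.prime
    have huX : ¬ u ∣ Polynomial.X := hXnd u hu (Or.inl huf)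
    obtain ⟨F, hF⟩ := hm
    have huF : ¬ u ∣ F := by
      rintro ⟨F', hF'⟩
      exact hm1 ⟨F', by rw [hF, hF', pow_succ]; ring⟩
    have hm0 : 0 < m := by
      rcases Nat.eq_zero_or_pos m with h0 | h1
      · exfalso
        rw [h0, pow_zero, one_mul] at hF
        exact huF (hF ▸ huf)
      · exact h1
    obtain ⟨n, G, hG, huG, hdvd1, hdvd2⟩ := extract u hirr
    have hcore := core_lemma k hk j h ε b c a hε hb ha u F G f g m n hu huX huF huG hF hG heq
    have hn := hcore.1 hm0
    constructor
    · rw [← hn]; exact hdvd1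
    · rw [show j * m + 2 = (j * m + 1) + 1 by omega, ← hn]; exact hdvd2
  refine ⟨part1, ?_⟩
  -- counts of normalized factors of f in g
  have hsub : ∀ p : Polynomial K, p ∈ normalizedFactors f →
      Multiset.count p (normalizedFactors g) = j * Multiset.count p (normalizedFactors f) + 1 := by
    intro p hp
    have hirr := irreducible_of_normalized_factor p hp
    have hnorm := normalize_normalized_factor p hp
    have hpf : p ∣ f := dvd_of_mem_normalizedFactors hp
    have hem : emultiplicity p f = (Multiset.count p (normalizedFactors f) : ℕ∞) := by
      rw [emultiplicity_eq_count_normalizedFactors hirr hf, hnorm]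
    obtain ⟨hd1, hd2⟩ := emultiplicity_eq_coe.mp hem
    have h1 := part1 p hirr hpf _ hd1 hd2
    exact count_normalizedFactors_eq hirr hnorm h1.1 h1.2
  have hfj : f ^ j ∣ g := by
    rw [dvd_iff_normalizedFactors_le_normalizedFactors (pow_ne_zero _ hf) hg,
      Multiset.le_iff_count]
    intro p
    rw [normalizedFactors_pow, Multiset.count_nsmul]
    by_cases hp : p ∈ normalizedFactors f
    · rw [hsub p hp]; omega
    · rw [Multiset.count_eq_zero_of_notMem hp]; omega
  obtain ⟨gbar, hgb⟩ := hfj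
  have hgb0 : gbar ≠ 0 := by
    rintro rfl
    rw [mul_zero] at hgb
    exact hg hgb
  have hcount : ∀ p : Polynomial K, Multiset.count p (normalizedFactors g)
      = j * Multiset.count p (normalizedFactors f) + Multiset.count p (normalizedFactors gbar) := by
    intro p
    rw [hgb, normalizedFactors_mul (pow_ne_zero _ hf) hgb0, Multiset.count_add,
      normalizedFactors_pow, Multiset.count_nsmul]
  -- counts in gbar
  have hcgbar : ∀ p : Polynomial K, p ∈ normalizedFactors gbar →
      Multiset.count p (normalizedFactors gbar) ≤ 1 := by
    intro p hmem
    have hirr := irreducible_of_normalized_factor p hmem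
    have hnorm := normalize_normalized_factor p hmem
    have hu : Prime p := prime_of_normalized_factor p hmem
    have hpg : p ∣ g := hgb ▸ dvd_mul_of_dvd_right (dvd_of_mem_normalizedFactors hmem) _
    have hcg : Multiset.count p (normalizedFactors g)
        = j * Multiset.count p (normalizedFactors f) + Multiset.count p (normalizedFactors gbar) :=
      hcount p
    by_cases hpf : p ∣ f
    · have h1e : (1 : ℕ∞) ≤ emultiplicity p f :=
        pow_dvd_iff_le_emultiplicity.mp (by simpa using hpf)
      have hce : emultiplicity p f = (Multiset.count p (normalizedFactors f) : ℕ∞) := by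
        rw [emultiplicity_eq_count_normalizedFactors hirr hf, hnorm]
      rw [hce] at h1e
      have hcpos : 1 ≤ Multiset.count p (normalizedFactors f) := by exact_mod_cast h1e
      have hpmem : p ∈ normalizedFactors f := Multiset.count_pos.mp (by omega)
      have := hsub p hpmem
      omega
    · obtain ⟨n, G, hG, huG, hdvd1, hdvd2⟩ := extract p hirr
      have hcore := core_lemma k hk j h ε b c a hε hb ha p f G f g 0 n hu
        (hXnd p hu (Or.inr hpg)) hpf huG (by rw [pow_zero, one_mul]) hG heq
      have hn1 : n ≤ 1 := hcore.2 rfl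
      have hcgn : Multiset.count p (normalizedFactors g) = n :=
        count_normalizedFactors_eq hirr hnorm hdvd1 hdvd2
      have hf0' : Multiset.count p (normalizedFactors f) = 0 :=
        Multiset.count_eq_zero_of_notMem (fun hmem' => hpf (dvd_of_mem_normalizedFactors hmem'))
      omega
  have hsq : Squarefree gbar := by
    rw [squarefree_iff_nodup_normalizedFactors hgb0, Multiset.nodup_iff_count_le_one]
    intro p
    by_cases hmem : p ∈ normalizedFactors gbar
    · exact hcgbar p hmem
    · rw [Multiset.count_eq_zero_of_notMem hmem]; omega
  refine ⟨gbar, hsq, hgb, ?_⟩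
  have hsubset : (normalizedFactors f).toFinset ⊆ (normalizedFactors gbar).toFinset := by
    intro p hp
    rw [Multiset.mem_toFinset] at hp ⊢
    rw [← Multiset.count_pos]
    have h1 := hsub p hp
    have h2 := hcount p
    omega
  have hstep : Multiset.card (normalizedFactors gbar) ≤ (normalizedFactors gbar).prod.natDegree := by
    rw [Polynomial.natDegree_multiset_prod _ (zero_notMem_normalizedFactors _)]
    exact card_le_sum_map _ _ (fun x hx => (irreducible_of_normalized_factor x hx).natDegree_pos)
  calc (normalizedFactors f).toFinset.card
      ≤ (normalizedFactors gbar).toFinset.card := Finset.card_le_card hsubset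
    _ ≤ Multiset.card (normalizedFactors gbar) := Multiset.toFinset_card_le _
    _ ≤ (normalizedFactors gbar).prod.natDegree := hstep
    _ ≤ gbar.natDegree :=
        Polynomial.natDegree_le_of_dvd (prod_normalizedFactors hgb0).dvd hgb0

end Dixmier
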